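/- Fix ℏ ∈ ℂ with ℏ ≠ 0 and N ∈ ℂ. For every j ∈ ℤ the identity (1/ℏ)·(f_j(u) − f_{j+1}(u)) = u·( ((2(j−N)−1)/4)·f_j(u) + (u/2)·f_j'(u) ) holds in ℂ[[u]]. Equivalently, the Kac–Schwarz operator a = (λ/2)·d/dλ + λ/ℏ − 1/4 acts on the basis vectors by a·Φ_j^{(N)} = (j−1−N/2)·Φ_j^{(N)} + (1/ℏ)·Φ_{j+1}^{(N)}; in terms of coefficients this is the identity a_k(x+1) − a_k(x) = 4·k·(2x+2k−3)·a_{k−1}(x), valid for all integers k ≥ 1 and all x ∈ ℂ. -/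

import Mathlib

noncomputable section

namespace BGWKS

/-- Formal derivative of a one-variable formal power series. -/
def d (g : PowerSeries ℂ) : PowerSeries ℂ := PowerSeries.derivative ℂ g

/-- `a_k(x) = Π_{i=1}^{k} (4(x−1)² − (2i−1)²)`, with `a_0(x) = 1`. -/
def aP (k : ℕ) (x : ℂ) : ℂ := ∏ i ∈ Finset.range k, (4*(x-1)^2 - ((2*i+1 : ℕ) : ℂ)^2)

/-- The series `f_j(u) = Σ_k ((−ℏ)^k·a_k(j−N)/(16^k·k!))·u^k` encoding the basis vector
`Φ_j^{(N)}(λ) = λ^{j−1}·f_j(1/λ)` of the generalized BGW point of the Sato Grassmannian. -/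
def f (ℏ N : ℂ) (j : ℤ) : PowerSeries ℂ :=
  PowerSeries.mk fun k => (-ℏ)^k * aP k ((j : ℂ) - N) / (16^k * (Nat.factorial k : ℂ))

end BGWKS

open BGWKS

lemma aP_succ (k : ℕ) (x : ℂ) :
    aP (k+1) x = aP k x * (4*(x-1)^2 - (2*(k:ℂ)+1)^2) := by
  simp only [aP, Finset.prod_range_succ]
  push_cast
  ring

lemma aP_zero (x : ℂ) : aP 0 x = 1 := by simp [aP]

lemma aP_succ_shift (k : ℕ) (x : ℂ) :
    aP (k+1) (x+1) = aP k x * ((2*x+2*(k:ℂ))^2 - 1) := by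
  induction k with
  | zero => simp [aP_succ, aP_zero]; ring
  | succ m ih =>
      rw [aP_succ (m+1) (x+1), ih, aP_succ m x]
      push_cast
      ring

lemma scalar_id (ℏ E A B P Q m x : ℂ) (hℏ : ℏ ≠ 0) (hP : P ≠ 0) (hQ : Q ≠ 0)
    (hm : m + 1 ≠ 0) :
    ℏ⁻¹ * (E * -ℏ * A / (P * 16 * ((m+1) * Q))
      - E * -ℏ * (A + 4*(m+1)*(2*x + 2*(m+1) - 3)*B) / (P * 16 * ((m+1) * Q)))
    = (2*x-1)/4 * (E * B / (P*Q)) + 1/2 * (m * (E * B / (P*Q))) := by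
  rw [div_sub_div_same,
    show E * -ℏ * A - E * -ℏ * (A + 4*(m+1)*(2*x + 2*(m+1) - 3)*B)
      = ℏ * (E * (4*(m+1)*(2*x + 2*(m+1) - 3)*B)) from by ring,
    mul_div_assoc, ← mul_assoc, inv_mul_cancel₀ hℏ, one_mul]
  rw [div_eq_iff (by exact mul_ne_zero (mul_ne_zero hP (by norm_num)) (mul_ne_zero hm hQ))]
  field_simp
  ring

lemma aP_key (k : ℕ) (x : ℂ) :
    aP (k+1) (x+1) - aP (k+1) x = 4*((k:ℂ)+1)*(2*x + 2*((k:ℂ)+1) - 3)*aP k x := by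
  rw [aP_succ_shift, aP_succ]
  ring

/-- the Kac–Schwarz operator `a = (λ/2)·d/dλ + λ/ℏ − 1/4` acts on the basis
vectors by `a·Φ_j^{(N)} = (j−1−N/2)·Φ_j^{(N)} + (1/ℏ)·Φ_{j+1}^{(N)}`, i.e.
`(1/ℏ)·(f_j − f_{j+1}) = u·( ((2(j−N)−1)/4)·f_j + (u/2)·f_j' )`; in terms of coefficients
this is `a_k(x+1) − a_k(x) = 4·k·(2x+2k−3)·a_{k−1}(x)` for `k ≥ 1`. -/
theorem kac_schwarz_a_action (ℏ N : ℂ) (hℏ : ℏ ≠ 0) :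
    (∀ j : ℤ, ℏ⁻¹ • (f ℏ N j - f ℏ N (j+1)) =
      PowerSeries.X * (((2*((j : ℂ) - N) - 1)/4) • f ℏ N j
        + (1/2 : ℂ) • (PowerSeries.X * d (f ℏ N j)))) ∧
    (∀ k : ℕ, 1 ≤ k → ∀ x : ℂ,
      aP k (x+1) - aP k x = 4*(k : ℂ)*(2*x + 2*(k : ℂ) - 3)*aP (k-1) x) := by
  constructor
  · intro j
    ext n
    set x : ℂ := (j : ℂ) - N with hx
    have hx1 : ((j : ℤ) + 1 : ℤ) = (j+1) := rfl
    have hxx : ((j+1 : ℤ) : ℂ) - N = x + 1 := by push_cast [hx]; ring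
    match n with
    | 0 =>
        simp [f, PowerSeries.coeff_zero_X_mul, aP_zero]
    | (n+1) =>
        rw [PowerSeries.coeff_succ_X_mul]
        simp only [map_smul, map_sub, map_add, f, PowerSeries.coeff_mk, hxx, d, smul_eq_mul]
        have hXd : (PowerSeries.coeff (R := ℂ) n)
            (PowerSeries.X * PowerSeries.derivative ℂ (PowerSeries.mk fun k =>
              (-ℏ)^k * aP k x / (16^k * (Nat.factorial k : ℂ)))) =
            (n : ℂ) * ((-ℏ)^n * aP n x / (16^n * (Nat.factorial n : ℂ))) := by
          match n with
          | 0 => simp [PowerSeries.coeff_zero_X_mul]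
          | (m+1) =>
              rw [PowerSeries.coeff_succ_X_mul, PowerSeries.coeff_derivative,
                PowerSeries.coeff_mk]
              push_cast
              ring
        rw [hXd]
        have hkey : aP (n+1) (x+1) = aP (n+1) x + 4*((n:ℂ)+1)*(2*x + 2*((n:ℂ)+1) - 3)*aP n x := by
          linear_combination aP_key n x
        rw [hkey]
        have h16 : (16 : ℂ)^n ≠ 0 := by norm_num
        have hfac : ((Nat.factorial n : ℂ)) ≠ 0 := by
          exact_mod_cast Nat.cast_ne_zero.2 (Nat.factorial_ne_zero n)
        have hfacs : ((Nat.factorial (n+1) : ℂ)) = ((n:ℂ)+1) * (Nat.factorial n : ℂ) := by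
          push_cast [Nat.factorial_succ]; ring
        have hn1 : ((n:ℂ)+1) ≠ 0 := Nat.cast_add_one_ne_zero n
        rw [pow_succ, hfacs, pow_succ (16:ℂ)]
        exact scalar_id ℏ ((-ℏ)^n) (aP (n+1) x) (aP n x) (16^n) (Nat.factorial n : ℂ)
          (n : ℂ) x hℏ h16 hfac hn1
  · intro k hk x
    obtain ⟨m, rfl⟩ := Nat.exists_eq_add_of_le hk
    simp only [show 1 + m = m + 1 from by ring, Nat.add_sub_cancel]
    push_cast
    linear_combination aP_key m x
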